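/- arXiv:1910.12701 — 4 statements merged into one kernel-verified Lean document; each statement's English description precedes it below -/
import Mathlib

section
/- Let α > 0, m ≥ 2 a fixed integer, and assume E[|x_{11}|^{τ₁} log^{τ₂}(1+|x_{11}|)] < ∞ with τ₁ = 4mα + 2 and τ₂ = 2mα + 3/2, and p = p_n → ∞ with p = O(n^α). Fix z ∈ ℝ and let ν_p = [log p - (1/(2m))(log log p + 2 log(m! √(mπ)) - z)]^{1/2}, c_n = √(2m/log n) · ν_p, and ξ₁ = x_{11} x_{12} ⋯ x_{1m}. Then n^{1+(c_n²/2)} √(log n) · P(|ξ₁| > √(n/log n)) → 0 as n → ∞. -/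
open MeasureTheory ProbabilityTheory Filter Real

lemma row_indep_aux {Ω : Type*} [MeasureSpace Ω]
    (x : ℕ → ℕ → Ω → ℝ)
    (hindep : iIndepFun
      (fun ki : ℕ × ℕ => x ki.1 ki.2) ℙ) :
    iIndepFun (fun t : ℕ => x 0 t) ℙ := by
  classical
  rw [iIndepFun_iff_measure_inter_preimage_eq_mul] at hindep ⊢
  intro S sets hsets
  have key := hindep (S.image fun t => ((0, t) : ℕ × ℕ))
    (sets := fun ki => sets ki.2) (fun ki hki => by
      simp only [Finset.mem_image] at hki
      obtain ⟨t, ht, rfl⟩ := hki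
      exact hsets t ht)
  rw [Finset.prod_image (fun a _ b _ h => by simpa using h)] at key
  rw [← key, Finset.set_biInter_finset_image]

lemma integrable_abs_rpow_aux {Ω : Type*} [MeasureSpace Ω]
    [IsProbabilityMeasure (ℙ : Measure Ω)] (f : Ω → ℝ) (hf : Measurable f)
    (a b : ℝ) (ha : 0 ≤ a) (hb : 0 ≤ b)
    (h : Integrable (fun ω => |f ω| ^ a * (Real.log (1 + |f ω|)) ^ b) ℙ) :
    Integrable (fun ω => |f ω| ^ a) ℙ := by
  have hlog2 : (0:ℝ) < Real.log 2 := Real.log_pos one_lt_two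
  refine Integrable.mono' ((integrable_const (1:ℝ)).add (h.const_mul ((Real.log 2) ^ (-b))))
    ((Real.continuous_rpow_const ha).measurable.comp hf.abs).aestronglyMeasurable
    (ae_of_all _ fun ω => ?_)
  simp only [Pi.add_apply]
  rw [Real.norm_eq_abs, abs_of_nonneg (Real.rpow_nonneg (abs_nonneg _) a)]
  rcases le_or_gt (|f ω|) 1 with h1 | h1
  · have h2 : |f ω| ^ a ≤ 1 := Real.rpow_le_one (abs_nonneg _) h1 ha
    have h3 : 0 ≤ (Real.log 2) ^ (-b) * (|f ω| ^ a * (Real.log (1 + |f ω|)) ^ b) := by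
      have := Real.log_nonneg (by linarith [abs_nonneg (f ω)] : (1:ℝ) ≤ 1 + |f ω|)
      positivity
    simpa using add_le_add h2 h3
  · have hl : Real.log 2 ≤ Real.log (1 + |f ω|) := Real.log_le_log (by norm_num) (by linarith)
    have h4 : |f ω| ^ a * (Real.log 2) ^ b ≤ |f ω| ^ a * (Real.log (1 + |f ω|)) ^ b :=
      mul_le_mul_of_nonneg_left (Real.rpow_le_rpow hlog2.le hl hb)
        (Real.rpow_nonneg (abs_nonneg _) a)
    have h5 : |f ω| ^ a ≤ (Real.log 2) ^ (-b) * (|f ω| ^ a * (Real.log (1 + |f ω|)) ^ b) := by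
      rw [Real.rpow_neg hlog2.le, inv_mul_eq_div, le_div_iff₀ (Real.rpow_pos_of_pos hlog2 b)]
      linarith
    linarith

set_option maxHeartbeats 1000000 in
/-- Lemma 5: under the assumptions of Theorem 2, with `ν_p` and `cₙ = √(2m/log n)·ν_p`,
`n^{1+cₙ²/2} √(log n) · P(|ξ₁| > √(n/log n)) → 0`, where `ξ₁ = x₁₁ x₁₂ ⋯ x₁ₘ`. -/
theorem product_tail_vanishes_high_dim
    {Ω : Type*} [MeasureSpace Ω] [IsProbabilityMeasure (ℙ : Measure Ω)]
    (x : ℕ → ℕ → Ω → ℝ)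
    (hmeas : ∀ k i, Measurable (x k i))
    (hindep : iIndepFun
      (fun ki : ℕ × ℕ => x ki.1 ki.2) ℙ)
    (hident : ∀ k i, IdentDistrib (x k i) (x 0 0) ℙ ℙ)
    (hmean : ∫ ω, x 0 0 ω ∂ℙ = 0)
    (hvar : ∫ ω, (x 0 0 ω) ^ 2 ∂ℙ = 1)
    (m : ℕ) (hm : 2 ≤ m)
    (α : ℝ) (hα : 0 < α)
    (hmom : Integrable (fun ω =>
      |x 0 0 ω| ^ (4 * m * α + 2) * (Real.log (1 + |x 0 0 ω|)) ^ (2 * m * α + 3 / 2)) ℙ)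
    (p : ℕ → ℕ) (hp : Tendsto p atTop atTop)
    (hpoly : (fun n => (p n : ℝ)) =O[atTop] (fun n => (n : ℝ) ^ α))
    (z : ℝ) (ν c : ℕ → ℝ)
    (hν : ∀ n, ν n = Real.sqrt (Real.log (p n) - (1 / (2 * m)) *
      (Real.log (Real.log (p n)) + 2 * Real.log (Nat.factorial m * Real.sqrt (m * π)) - z)))
    (hc : ∀ n, c n = Real.sqrt (2 * m / Real.log n) * ν n) :
    Tendsto (fun n : ℕ => (n : ℝ) ^ (1 + (c n) ^ 2 / 2) * Real.sqrt (Real.log n) *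
        (ℙ {ω | Real.sqrt (n / Real.log n) < |∏ t ∈ Finset.range m, x 0 t ω|}).toReal)
      atTop (nhds 0) := by
  classical
  have hm0 : (0:ℝ) < (m:ℝ) := by
    have : 0 < m := by omega
    exact_mod_cast this
  set s : ℝ := 4 * (m : ℝ) * α + 2 with hs_def
  have hs0 : 0 ≤ s := by positivity
  -- integrability of |x 0 0|^s
  have hXs : Integrable (fun ω => |x 0 0 ω| ^ s) ℙ :=
    integrable_abs_rpow_aux (x 0 0) (hmeas 0 0) s (2 * (m:ℝ) * α + 3/2) hs0 (by positivity) hmom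
  -- the family g t = |x 0 t|^s
  set g : ℕ → Ω → ℝ := fun t ω => |x 0 t ω| ^ s with hg_def
  have hg_meas : ∀ t, Measurable (g t) := fun t =>
    (Real.continuous_rpow_const hs0).measurable.comp (hmeas 0 t).abs
  have hg_int : ∀ t, Integrable (g t) ℙ := by
    intro t
    have hid := (hident 0 t).comp
      (((Real.continuous_rpow_const hs0).measurable).comp measurable_abs)
    exact hid.integrable_iff.mpr hXs
  have hg_indep : iIndepFun g ℙ :=
    (row_indep_aux x hindep).comp (fun _ y => |y| ^ s)
      (fun _ => (Real.continuous_rpow_const hs0).measurable.comp measurable_abs)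
  -- product integrable
  have hprod : ∀ k, Integrable (fun ω => ∏ t ∈ Finset.range k, g t ω) ℙ := by
    intro k
    induction k with
    | zero => simpa using (integrable_const (1:ℝ))
    | succ k ih =>
      have hind := hg_indep.indepFun_prod_range_succ hg_meas k
      have h2 : Integrable (∏ j ∈ Finset.range k, g j) ℙ := by
        have he : (∏ j ∈ Finset.range k, g j) = fun ω => ∏ t ∈ Finset.range k, g t ω := by
          funext ω; simp [Finset.prod_apply]
        rw [he]; exact ih
      have h3 := hind.integrable_mul h2 (hg_int k)
      have he2 : (fun ω => ∏ t ∈ Finset.range (k+1), g t ω)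
          = (∏ j ∈ Finset.range k, g j) * g k := by
        funext ω; simp [Finset.prod_apply, Finset.prod_range_succ]
      rw [he2]; exact h3
  set F : Ω → ℝ := fun ω => ∏ t ∈ Finset.range m, g t ω with hF_def
  have hF_int : Integrable F ℙ := hprod m
  have hF_nonneg : ∀ ω, 0 ≤ F ω := fun ω =>
    Finset.prod_nonneg fun t _ => Real.rpow_nonneg (abs_nonneg _) s
  set M : ℝ := ∫ ω, F ω ∂ℙ with hM_def
  have hM0 : 0 ≤ M := integral_nonneg hF_nonneg
  -- Markov bound
  have markov : ∀ n : ℕ, 0 < Real.sqrt ((n:ℝ) / Real.log n) →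
      (ℙ {ω | Real.sqrt ((n:ℝ) / Real.log n) < |∏ t ∈ Finset.range m, x 0 t ω|}).toReal ≤
        M / (Real.sqrt ((n:ℝ) / Real.log n)) ^ s := by
    intro n hT
    set T : ℝ := Real.sqrt ((n:ℝ) / Real.log n)
    have hTs : 0 < T ^ s := Real.rpow_pos_of_pos hT s
    have hsub : {ω | T < |∏ t ∈ Finset.range m, x 0 t ω|} ⊆ {ω | T ^ s ≤ F ω} := by
      intro ω hω
      simp only [Set.mem_setOf_eq] at hω ⊢
      have h1 : T ^ s ≤ |∏ t ∈ Finset.range m, x 0 t ω| ^ s :=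
        Real.rpow_le_rpow hT.le hω.le hs0
      calc T ^ s ≤ |∏ t ∈ Finset.range m, x 0 t ω| ^ s := h1
        _ = (∏ t ∈ Finset.range m, |x 0 t ω|) ^ s := by rw [Finset.abs_prod]
        _ = F ω := (Real.finset_prod_rpow _ _ (fun t _ => abs_nonneg _) s).symm
    have hmar := mul_meas_ge_le_integral_of_nonneg (μ := (ℙ : Measure Ω))
      (ae_of_all _ hF_nonneg) hF_int (T ^ s)
    have h2 : (ℙ {ω | T < |∏ t ∈ Finset.range m, x 0 t ω|}).toReal ≤
        (ℙ {ω | T ^ s ≤ F ω}).toReal :=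
      ENNReal.toReal_mono (measure_ne_top _ _) (measure_mono hsub)
    rw [le_div_iff₀ hTs]
    calc (ℙ {ω | T < |∏ t ∈ Finset.range m, x 0 t ω|}).toReal * T ^ s
        ≤ (ℙ {ω | T ^ s ≤ F ω}).toReal * T ^ s := by
          exact mul_le_mul_of_nonneg_right h2 hTs.le
      _ = T ^ s * (ℙ {ω | T ^ s ≤ F ω}).toReal := mul_comm _ _
      _ ≤ M := hmar
  -- constants from isBigO
  obtain ⟨K, hK0, hKO⟩ := hpoly.exists_pos
  have hKbound : ∀ᶠ n : ℕ in atTop, (p n : ℝ) ≤ K * (n:ℝ) ^ α := by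
    filter_upwards [hKO.bound] with n hn
    rwa [Real.norm_natCast, Real.norm_rpow_of_nonneg (Nat.cast_nonneg n),
      Real.norm_natCast] at hn
  set LC : ℝ := Real.log (Nat.factorial m * Real.sqrt ((m:ℝ) * π)) with hLC_def
  have hloglog : Tendsto (fun n => Real.log (Real.log (p n))) atTop atTop :=
    Real.tendsto_log_atTop.comp (Real.tendsto_log_atTop.comp
      (tendsto_natCast_atTop_atTop.comp hp))
  set a : ℝ := (m:ℝ) * α with ha_def
  have ha0 : 0 < a := by positivity
  set b : ℝ := 2 * (m:ℝ) * α + 2 with hb_def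
  -- the dominating sequence
  have hdom : Tendsto (fun n : ℕ => (K ^ (m:ℝ) * M) * ((Real.log n) ^ b / (n:ℝ) ^ a))
      atTop (nhds 0) := by
    have h0 : Tendsto (fun y : ℝ => (Real.log y) ^ b / y ^ a) atTop (nhds 0) :=
      (isLittleO_log_rpow_rpow_atTop b ha0).tendsto_div_nhds_zero
    have h1 := (h0.comp tendsto_natCast_atTop_atTop).const_mul (K ^ (m:ℝ) * M)
    simpa using h1
  refine squeeze_zero' ?_ ?_ hdom
  · filter_upwards with n
    positivity
  · filter_upwards [eventually_ge_atTop 3, hloglog.eventually_ge_atTop (z - 2 * LC),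
      hKbound, hp.eventually_ge_atTop 1] with n hn3 hD hKn hp1
    set N : ℝ := (n:ℝ) with hN_def
    have hN3 : (3:ℝ) ≤ N := by simp only [hN_def]; exact_mod_cast hn3
    have hN0 : (0:ℝ) < N := by linarith
    set L : ℝ := Real.log N with hL_def
    have hL1 : 1 ≤ L := by
      have h3 : Real.exp 1 ≤ N := by
        have h := Real.exp_one_lt_d9
        have h2 : (2.7182818286:ℝ) ≤ 3 := by norm_num
        linarith
      calc (1:ℝ) = Real.log (Real.exp 1) := (Real.log_exp 1).symm
        _ ≤ Real.log N := Real.log_le_log (Real.exp_pos 1) h3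
    have hL0 : 0 < L := lt_of_lt_of_le one_pos hL1
    have hp0 : (0:ℝ) < (p n : ℝ) := by exact_mod_cast hp1
    have hlogp0 : 0 ≤ Real.log (p n) := Real.log_nonneg (by exact_mod_cast hp1)
    -- step 1 : ν n ^ 2 ≤ log (p n)
    have step1 : ν n ^ 2 ≤ Real.log (p n) := by
      have hD0 : 0 ≤ (1 / (2 * (m:ℝ))) *
          (Real.log (Real.log (p n)) + 2 * LC - z) := by
        apply mul_nonneg (by positivity)
        linarith
      have hE : Real.log (p n) - (1 / (2 * (m:ℝ))) *
          (Real.log (Real.log (p n)) + 2 * LC - z) ≤ Real.log (p n) := by linarith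
      calc ν n ^ 2 = Real.sqrt (Real.log (p n) - (1 / (2 * (m:ℝ))) *
            (Real.log (Real.log (p n)) + 2 * LC - z)) ^ 2 := by rw [hν n]
        _ ≤ Real.sqrt (Real.log (p n)) ^ 2 := by
            apply pow_le_pow_left₀ (Real.sqrt_nonneg _) (Real.sqrt_le_sqrt hE)
        _ = Real.log (p n) := Real.sq_sqrt hlogp0
    -- step 2 : c n ^ 2 = (2m/L) ν²
    have hc2 : c n ^ 2 = 2 * (m:ℝ) / L * ν n ^ 2 := by
      rw [hc n, mul_pow, Real.sq_sqrt (by positivity : (0:ℝ) ≤ 2 * (m:ℝ) / L)]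
    -- step 3
    have step3 : N ^ (1 + c n ^ 2 / 2) = N * Real.exp ((m:ℝ) * ν n ^ 2) := by
      rw [Real.rpow_def_of_pos hN0]
      rw [show Real.log N * (1 + c n ^ 2 / 2) = Real.log N + (m:ℝ) * ν n ^ 2 by
        rw [hc2]; field_simp; ring]
      rw [Real.exp_add, Real.exp_log hN0]
    -- step 4
    have step4 : Real.exp ((m:ℝ) * ν n ^ 2) ≤ K ^ (m:ℝ) * N ^ (α * (m:ℝ)) := by
      calc Real.exp ((m:ℝ) * ν n ^ 2) ≤ Real.exp ((m:ℝ) * Real.log (p n)) :=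
            Real.exp_le_exp.mpr (mul_le_mul_of_nonneg_left step1 hm0.le)
        _ = (p n : ℝ) ^ (m:ℝ) := by rw [Real.rpow_def_of_pos hp0, mul_comm]
        _ ≤ (K * N ^ α) ^ (m:ℝ) :=
            Real.rpow_le_rpow (Nat.cast_nonneg _) hKn (Nat.cast_nonneg m)
        _ = K ^ (m:ℝ) * N ^ (α * (m:ℝ)) := by
            rw [Real.mul_rpow hK0.le (Real.rpow_nonneg hN0.le α),
              ← Real.rpow_mul hN0.le]
    -- Markov applies
    have hNL : (0:ℝ) < N / L := by positivity
    have hT0 : 0 < Real.sqrt (N / L) := Real.sqrt_pos.mpr hNL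
    have hP := markov n (by rwa [hN_def, hL_def] at hT0)
    set P : ℝ := (ℙ {ω | Real.sqrt ((n:ℝ) / Real.log n) <
      |∏ t ∈ Finset.range m, x 0 t ω|}).toReal with hP_def
    have hP0 : 0 ≤ P := ENNReal.toReal_nonneg
    set a2 : ℝ := 2 * (m:ℝ) * α + 1 with ha2_def
    have hTs : (Real.sqrt ((n:ℝ) / Real.log n)) ^ s = (N / L) ^ a2 := by
      rw [show Real.sqrt ((n:ℝ) / Real.log n) = Real.sqrt (N / L) by rw [hN_def, hL_def]]
      rw [Real.sqrt_eq_rpow, ← Real.rpow_mul hNL.le]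
      congr 1
      rw [hs_def, ha2_def]; ring
    rw [hTs] at hP
    -- nonneg facts
    have hRnonneg : 0 ≤ M / (N / L) ^ a2 :=
      div_nonneg hM0 (Real.rpow_pos_of_pos hNL a2).le
    have hsqL : Real.sqrt L ≤ L := by
      rw [Real.sqrt_le_left hL0.le, sq]
      exact le_mul_of_one_le_left hL0.le hL1
    -- main chain
    have hLlogn : Real.sqrt (Real.log (n:ℕ)) = Real.sqrt L := by rw [hL_def, hN_def]
    calc N ^ (1 + c n ^ 2 / 2) * Real.sqrt (Real.log (n:ℕ)) * P
        ≤ N ^ (1 + c n ^ 2 / 2) * Real.sqrt L * (M / (N / L) ^ a2) := by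
          rw [hLlogn]
          exact mul_le_mul_of_nonneg_left hP
            (by positivity)
      _ = N * Real.exp ((m:ℝ) * ν n ^ 2) * Real.sqrt L * (M / (N / L) ^ a2) := by
          rw [step3]
      _ ≤ N * (K ^ (m:ℝ) * N ^ (α * (m:ℝ))) * L * (M / (N / L) ^ a2) := by
          apply mul_le_mul_of_nonneg_right _ hRnonneg
          apply mul_le_mul (mul_le_mul_of_nonneg_left step4 hN0.le) hsqL
            (Real.sqrt_nonneg _) (by positivity)
      _ = (K ^ (m:ℝ) * M) * (L ^ b / N ^ a) := by
          have hNa2 : (0:ℝ) < N ^ a2 := Real.rpow_pos_of_pos hN0 a2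
          have hLa2 : (0:ℝ) < L ^ a2 := Real.rpow_pos_of_pos hL0 a2
          have e1 : N * N ^ (α * (m:ℝ)) / N ^ a2 = (N ^ a)⁻¹ := by
            rw [show N * N ^ (α * (m:ℝ)) = N ^ (α * (m:ℝ) + 1) by
              rw [Real.rpow_add hN0, Real.rpow_one]; ring]
            rw [← Real.rpow_sub hN0]
            rw [show α * (m:ℝ) + 1 - a2 = -a by rw [ha2_def, ha_def]; ring]
            rw [Real.rpow_neg hN0.le]
          have e2 : L * L ^ a2 = L ^ b := by
            rw [show L * L ^ a2 = L ^ a2 * L ^ (1:ℝ) by rw [Real.rpow_one]; ring,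
              ← Real.rpow_add hL0]
            congr 1
            rw [ha2_def, hb_def]; ring
          rw [Real.div_rpow hN0.le hL0.le, div_eq_mul_inv (L ^ b), ← e1, ← e2]
          field_simp
end

section
/- Let ξ be a real random variable with E ξ = 0 and E|ξ|^r ≤ K < ∞ for some r > 2. For a > 0, define the truncated and centered variable ξ' = ξ·1{|ξ| ≤ a} - E[ξ·1{|ξ| ≤ a}]. Then Var(ξ) ≥ Var(ξ') ≥ Var(ξ) - 3K/a^{r-2}. -/
open MeasureTheory ProbabilityTheory Filter Real

/-- Variance loss under truncation: if `E ξ = 0` and `E|ξ|^r ≤ K` for some `r > 2`, then the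
truncated, centered variable `ξ' = ξ·1{|ξ| ≤ a} - E[ξ·1{|ξ| ≤ a}]` satisfies
`Var(ξ) ≥ Var(ξ') ≥ Var(ξ) - 3K/a^{r-2}`. -/
theorem variance_of_truncation
    {Ω : Type*} [MeasureSpace Ω] [IsProbabilityMeasure (ℙ : Measure Ω)]
    (ξ : Ω → ℝ) (hmeas : Measurable ξ)
    (hmean : ∫ ω, ξ ω ∂ℙ = 0)
    (r K : ℝ) (hr : 2 < r)
    (hint : Integrable (fun ω => |ξ ω| ^ r) ℙ)
    (hK : ∫ ω, |ξ ω| ^ r ∂ℙ ≤ K)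
    (a : ℝ) (ha : 0 < a)
    (ξ' : Ω → ℝ)
    (hξ' : ∀ ω, ξ' ω = (if |ξ ω| ≤ a then ξ ω else 0)
      - ∫ ω', (if |ξ ω'| ≤ a then ξ ω' else 0) ∂ℙ) :
    variance ξ' ℙ ≤ variance ξ ℙ ∧
      variance ξ ℙ - 3 * K / a ^ (r - 2) ≤ variance ξ' ℙ := by
  set g : Ω → ℝ := fun ω => if |ξ ω| ≤ a then ξ ω else 0 with hgdef
  set h : Ω → ℝ := fun ω => if |ξ ω| ≤ a then 0 else ξ ω with hhdef
  have hmset : MeasurableSet {ω | |ξ ω| ≤ a} := measurableSet_le hmeas.abs measurable_const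
  have hgmeas : Measurable g := Measurable.ite hmset hmeas measurable_const
  have hhmeas : Measurable h := Measurable.ite hmset measurable_const hmeas
  set c : ℝ := a ^ (r - 2) with hcdef
  have hc : 0 < c := Real.rpow_pos_of_pos ha _
  -- pointwise bound ξ² ≤ 1 + |ξ|^r
  have hsq_le : ∀ ω, ξ ω ^ 2 ≤ 1 + |ξ ω| ^ r := by
    intro ω
    have hx : (0:ℝ) ≤ |ξ ω| := abs_nonneg _
    rcases le_or_gt (|ξ ω|) 1 with h1 | h1
    · have : ξ ω ^ 2 ≤ 1 := by
        rw [← sq_abs]; exact pow_le_one₀ hx h1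
      have h2 : (0:ℝ) ≤ |ξ ω| ^ r := Real.rpow_nonneg hx _
      linarith
    · have h2 : |ξ ω| ^ (2:ℝ) ≤ |ξ ω| ^ r :=
        Real.rpow_le_rpow_of_exponent_le h1.le hr.le
      have h3 : |ξ ω| ^ (2:ℝ) = ξ ω ^ 2 := by
        rw [show (2:ℝ) = ((2:ℕ):ℝ) by norm_num, Real.rpow_natCast]
        exact sq_abs _
      nlinarith
  have hξsq_int : Integrable (fun ω => ξ ω ^ 2) ℙ := by
    refine Integrable.mono' ((integrable_const 1).add hint)
      ((hmeas.pow_const 2).aestronglyMeasurable) ?_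
    filter_upwards with ω
    rw [Real.norm_eq_abs, abs_of_nonneg (sq_nonneg _)]
    exact hsq_le ω
  have hξ2 : MemLp ξ 2 ℙ :=
    (memLp_two_iff_integrable_sq hmeas.aestronglyMeasurable).2 hξsq_int
  have hg2 : MemLp g 2 ℙ := by
    refine MemLp.of_bound hgmeas.aestronglyMeasurable a ?_
    filter_upwards with ω
    rw [Real.norm_eq_abs]
    by_cases hca : |ξ ω| ≤ a <;> simp [hgdef, hca, ha.le]
  have hgh : ξ = g + h := by
    funext ω
    by_cases hca : |ξ ω| ≤ a <;> simp [hgdef, hhdef, hca]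
  have hh2 : MemLp h 2 ℙ := by
    have : h = ξ - g := by rw [hgh]; ring
    rw [this]; exact hξ2.sub hg2
  have hξint : Integrable ξ ℙ := hξ2.integrable one_le_two
  have hgint : Integrable g ℙ := hg2.integrable one_le_two
  have hhint : Integrable h ℙ := hh2.integrable one_le_two
  have hgsq_int : Integrable (fun ω => g ω ^ 2) ℙ := hg2.integrable_sq
  have hhsq_int : Integrable (fun ω => h ω ^ 2) ℙ := hh2.integrable_sq
  set μ : ℝ := ∫ ω, g ω ∂ℙ with hμdef
  -- ∫ h = -μ
  have hhmean : ∫ ω, h ω ∂ℙ = -μ := by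
    have : ∫ ω, (g ω + h ω) ∂ℙ = 0 := by
      rw [← hmean]; congr 1; funext ω; rw [hgh]; simp
    rw [integral_add hgint hhint] at this
    linarith
  -- splitting of ξ²
  have hsqsplit : ∫ ω, ξ ω ^ 2 ∂ℙ = (∫ ω, g ω ^ 2 ∂ℙ) + ∫ ω, h ω ^ 2 ∂ℙ := by
    rw [← integral_add hgsq_int hhsq_int]
    congr 1; funext ω
    by_cases hca : |ξ ω| ≤ a <;> simp [hgdef, hhdef, hca]
  -- bound on ∫ h²
  have hhb : ∀ ω, h ω ^ 2 ≤ |ξ ω| ^ r / c := by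
    intro ω
    by_cases hca : |ξ ω| ≤ a
    · have hz : h ω = 0 := if_pos hca
      rw [hz]
      have : (0:ℝ) ≤ |ξ ω| ^ r / c :=
        div_nonneg (Real.rpow_nonneg (abs_nonneg _) _) hc.le
      simpa using this
    · have hz : h ω = ξ ω := if_neg hca
      rw [hz]
      push_neg at hca
      rw [le_div_iff₀ hc]
      have h0 : 0 < |ξ ω| := lt_trans ha hca
      have hsplit : |ξ ω| ^ r = |ξ ω| ^ (2:ℝ) * |ξ ω| ^ (r - 2) := by
        rw [← Real.rpow_add h0]; ring_nf
      have h2 : |ξ ω| ^ (2:ℝ) = ξ ω ^ 2 := by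
        rw [show (2:ℝ) = ((2:ℕ):ℝ) by norm_num, Real.rpow_natCast]
        exact sq_abs _
      have h3 : c ≤ |ξ ω| ^ (r - 2) :=
        Real.rpow_le_rpow ha.le hca.le (by linarith)
      calc ξ ω ^ 2 * c ≤ ξ ω ^ 2 * |ξ ω| ^ (r - 2) := by
            exact mul_le_mul_of_nonneg_left h3 (sq_nonneg _)
        _ = |ξ ω| ^ r := by rw [hsplit, h2]
  have hhsq_le : ∫ ω, h ω ^ 2 ∂ℙ ≤ K / c := by
    calc ∫ ω, h ω ^ 2 ∂ℙ ≤ ∫ ω, |ξ ω| ^ r / c ∂ℙ :=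
          integral_mono hhsq_int (hint.div_const c) hhb
      _ = (∫ ω, |ξ ω| ^ r ∂ℙ) / c := integral_div c _
      _ ≤ K / c := by
          gcongr
  -- (∫h)² ≤ ∫ h²
  have hvar_h : (∫ ω, h ω ∂ℙ) ^ 2 ≤ ∫ ω, h ω ^ 2 ∂ℙ := by
    have h0 := variance_nonneg h ℙ
    rw [variance_eq_sub hh2] at h0
    simp only [Pi.pow_apply] at h0
    linarith
  have hμsq : μ ^ 2 ≤ ∫ ω, h ω ^ 2 ∂ℙ := by
    rw [hhmean] at hvar_h; simpa using hvar_h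
  have hvarξ : variance ξ ℙ = ∫ ω, ξ ω ^ 2 ∂ℙ := by
    rw [variance_eq_sub hξ2]
    simp [hmean]
  have hξ'eq : ξ' = fun ω => g ω - μ := funext fun ω => hξ' ω
  have hξ'2 : MemLp ξ' 2 ℙ := by
    rw [hξ'eq]; exact hg2.sub (memLp_const μ)
  have hξ'mean : ∫ ω, ξ' ω ∂ℙ = 0 := by
    rw [hξ'eq, integral_sub hgint (integrable_const μ)]
    simp [hμdef]
  have hξ'sq : ∫ ω, ξ' ω ^ 2 ∂ℙ = (∫ ω, g ω ^ 2 ∂ℙ) - μ ^ 2 := by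
    have e : (fun ω => ξ' ω ^ 2) = fun ω => (g ω ^ 2 - 2 * μ * g ω) + μ ^ 2 := by
      funext ω; rw [hξ'eq]; ring
    have i1 : Integrable (fun ω => g ω ^ 2 - 2 * μ * g ω) ℙ :=
      hgsq_int.sub (hgint.const_mul (2*μ))
    rw [e, integral_add i1 (integrable_const _),
      integral_sub hgsq_int (hgint.const_mul (2*μ)), integral_const_mul]
    simp only [integral_const, measure_univ, probReal_univ, ENNReal.toReal_one, smul_eq_mul, one_mul]
    rw [← hμdef]; ring
  have hvarξ' : variance ξ' ℙ = (∫ ω, g ω ^ 2 ∂ℙ) - μ ^ 2 := by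
    rw [variance_eq_sub hξ'2]
    simp only [Pi.pow_apply]
    rw [hξ'mean, hξ'sq]; ring
  have hKnn : 0 ≤ K :=
    le_trans (integral_nonneg fun ω => Real.rpow_nonneg (abs_nonneg _) _) hK
  have hhsqnn : 0 ≤ ∫ ω, h ω ^ 2 ∂ℙ := integral_nonneg fun ω => sq_nonneg _
  constructor
  · rw [hvarξ, hvarξ', hsqsplit]; nlinarith [sq_nonneg μ]
  · rw [hvarξ, hvarξ', hsqsplit]
    have h3 : 3 * K / c = 3 * (K / c) := by ring
    have h1 : (0:ℝ) ≤ K / c := div_nonneg hKnn hc.le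
    rw [h3]
    linarith
end

section
/- Let m ≥ 1 be an integer, let τ₁ > 0 and τ₂ ≥ 1, and define g(x) = x^{τ₁} log^{τ₂}(1+x) for x ≥ 0. Let x₁, …, x_m be i.i.d. real random variables with E[|x₁|^{τ₁} log^{τ₂}(1+|x₁|)] < ∞. Then E g(|x₁ x₂ ⋯ x_m|) ≤ m^{τ₂} · E[|x₁|^{τ₁} log^{τ₂}(1+|x₁|)] · (E|x₁|^{τ₁})^{m-1} < ∞. -/
open MeasureTheory ProbabilityTheory Filter Real

/-- `1 + ∏ a ≤ ∏ (1 + a)` for nonnegative reals over a nonempty finset. -/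
lemma one_add_prod_le_prod_one_add' {ι : Type*} {s : Finset ι} (hs : s.Nonempty)
    (a : ι → ℝ) (ha : ∀ i ∈ s, 0 ≤ a i) :
    1 + ∏ i ∈ s, a i ≤ ∏ i ∈ s, (1 + a i) := by
  induction hs using Finset.Nonempty.cons_induction with
  | singleton i => simp
  | cons i s hi hs ih =>
      rw [Finset.prod_cons, Finset.prod_cons]
      have hai : 0 ≤ a i := ha i (Finset.mem_cons_self i s)
      have ha' : ∀ j ∈ s, 0 ≤ a j := fun j hj => ha j (Finset.mem_cons_of_mem hj)
      have hP : 0 ≤ ∏ j ∈ s, a j := Finset.prod_nonneg ha'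
      have ih' := ih ha'
      have h1 : 1 + a i * ∏ j ∈ s, a j ≤ (1 + a i) * (1 + ∏ j ∈ s, a j) := by nlinarith
      refine h1.trans ?_
      have : 0 ≤ 1 + a i := by linarith
      exact mul_le_mul_of_nonneg_left ih' this

/-- Product of independent integrable random variables: integrability and factorization
of the integral. -/
lemma integrable_and_integral_prod_of_iIndepFun
    {Ω : Type*} [MeasureSpace Ω] [IsProbabilityMeasure (ℙ : Measure Ω)]
    (y : ℕ → Ω → ℝ) (hmeas : ∀ i, Measurable (y i))
    (hindep : iIndepFun y ℙ)
    (hint : ∀ i, Integrable (y i) ℙ) (n : ℕ) :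
    Integrable (fun ω => ∏ t ∈ Finset.range n, y t ω) ℙ ∧
      ∫ ω, ∏ t ∈ Finset.range n, y t ω ∂ℙ = ∏ t ∈ Finset.range n, ∫ ω, y t ω ∂ℙ := by
  induction n with
  | zero => simp
  | succ n ih =>
      have hind : IndepFun (∏ j ∈ Finset.range n, y j) (y n) ℙ :=
        iIndepFun.indepFun_prod_range_succ hindep hmeas n
      have hfun : (∏ j ∈ Finset.range n, y j) = fun ω => ∏ t ∈ Finset.range n, y t ω := by
        ext ω; simp [Finset.prod_apply]
      rw [hfun] at hind
      have hintP : Integrable ((fun ω => ∏ t ∈ Finset.range n, y t ω) * y n) ℙ :=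
        hind.integrable_mul ih.1 (hint n)
      have hintegral := hind.integral_mul_eq_mul_integral ih.1.aestronglyMeasurable (hint n).aestronglyMeasurable
      constructor
      · have : ((fun ω => ∏ t ∈ Finset.range n, y t ω) * y n)
            = fun ω => ∏ t ∈ Finset.range (n + 1), y t ω := by
          ext ω; simp [Finset.prod_range_succ]
        rwa [this] at hintP
      · have h1 : (fun ω => ∏ t ∈ Finset.range (n + 1), y t ω)
            = ((fun ω => ∏ t ∈ Finset.range n, y t ω) * y n) := by
          ext ω; simp [Finset.prod_range_succ]
        rw [h1, hintegral, ih.2, Finset.prod_range_succ]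

/-- Moment bound for a product of i.i.d. variables: with `g(x) = x^{τ₁} log^{τ₂}(1+x)`,
`E g(|x₁ ⋯ xₘ|) ≤ m^{τ₂} · E[|x₁|^{τ₁} log^{τ₂}(1+|x₁|)] · (E|x₁|^{τ₁})^{m-1} < ∞`. -/
theorem g_moment_of_product
    {Ω : Type*} [MeasureSpace Ω] [IsProbabilityMeasure (ℙ : Measure Ω)]
    (m : ℕ) (hm : 1 ≤ m)
    (τ₁ τ₂ : ℝ) (hτ₁ : 0 < τ₁) (hτ₂ : 1 ≤ τ₂)
    (x : ℕ → Ω → ℝ)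
    (hmeas : ∀ i, Measurable (x i))
    (hindep : iIndepFun x ℙ)
    (hident : ∀ i, IdentDistrib (x i) (x 0) ℙ ℙ)
    (hmom : Integrable (fun ω => |x 0 ω| ^ τ₁ * (Real.log (1 + |x 0 ω|)) ^ τ₂) ℙ) :
    Integrable (fun ω => |∏ t ∈ Finset.range m, x t ω| ^ τ₁ *
      (Real.log (1 + |∏ t ∈ Finset.range m, x t ω|)) ^ τ₂) ℙ ∧
    ∫ ω, |∏ t ∈ Finset.range m, x t ω| ^ τ₁ *
        (Real.log (1 + |∏ t ∈ Finset.range m, x t ω|)) ^ τ₂ ∂ℙ ≤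
      (m : ℝ) ^ τ₂ * (∫ ω, |x 0 ω| ^ τ₁ * (Real.log (1 + |x 0 ω|)) ^ τ₂ ∂ℙ) *
        (∫ ω, |x 0 ω| ^ τ₁ ∂ℙ) ^ (m - 1) := by
  -- notation
  set g : ℝ → ℝ := fun u => |u| ^ τ₁ * Real.log (1 + |u|) ^ τ₂ with hg_def
  set p : ℝ → ℝ := fun u => |u| ^ τ₁ with hp_def
  have hτ₂0 : (0:ℝ) ≤ τ₂ := le_trans zero_le_one hτ₂
  have hg_meas : Measurable g := by unfold g; measurability
  have hp_meas : Measurable p := by unfold p; measurability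
  have hg_nonneg : ∀ u, 0 ≤ g u := fun u => by
    have h1 : (0:ℝ) ≤ Real.log (1 + |u|) :=
      Real.log_nonneg (by simpa using abs_nonneg u)
    positivity
  have hp_nonneg : ∀ u, 0 ≤ p u := fun u => by positivity
  -- integrability of |x 0|^τ₁
  have hp_le : ∀ u : ℝ, p u ≤ Real.exp 1 ^ τ₁ + g u := by
    intro u
    rcases le_or_gt (1 + |u|) (Real.exp 1) with h | h
    · have hu : |u| ≤ Real.exp 1 := by
        have := Real.add_one_le_exp (1:ℝ)
        linarith
      have : p u ≤ Real.exp 1 ^ τ₁ :=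
        Real.rpow_le_rpow (abs_nonneg u) hu hτ₁.le
      linarith [hg_nonneg u]
    · have h1 : (1:ℝ) ≤ Real.log (1 + |u|) := by
        rw [Real.le_log_iff_exp_le (by positivity)]
        exact h.le
      have h2 : (1:ℝ) ≤ Real.log (1 + |u|) ^ τ₂ :=
        Real.one_le_rpow h1 hτ₂0
      have h3 : p u = p u * 1 := (mul_one _).symm
      have h4 : p u * 1 ≤ p u * Real.log (1 + |u|) ^ τ₂ :=
        mul_le_mul_of_nonneg_left h2 (hp_nonneg u)
      have : p u ≤ g u := by rw [h3]; exact h4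
      have he : (0:ℝ) ≤ Real.exp 1 ^ τ₁ := by positivity
      linarith
  have hp0_int : Integrable (fun ω => p (x 0 ω)) ℙ := by
    have hmaj : Integrable (fun ω => Real.exp 1 ^ τ₁ + g (x 0 ω)) ℙ :=
      (integrable_const _).add hmom
    refine Integrable.mono hmaj ((hp_meas.comp (hmeas 0)).aestronglyMeasurable) ?_
    filter_upwards with ω
    rw [Real.norm_eq_abs, Real.norm_eq_abs, abs_of_nonneg (hp_nonneg _),
      abs_of_nonneg (add_nonneg (by positivity) (hg_nonneg (x 0 ω)))]
    exact hp_le _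
  -- per-index factor functions
  set h : ℕ → ℕ → ℝ → ℝ := fun j t u =>
    |u| ^ τ₁ * (if t = j then Real.log (1 + |u|) ^ τ₂ else 1) with hh_def
  have hh_meas : ∀ j t, Measurable (h j t) := by
    intro j t
    by_cases hjt : t = j <;> simp only [hh_def, hjt, if_true, if_false] <;> first
      | exact hg_meas
      | simpa using hp_meas
  have hh_cases : ∀ j t, h j t = (if t = j then g else p) := by
    intro j t
    by_cases hjt : t = j <;> ext u <;> simp [hh_def, hjt, hg_def, hp_def]
  -- for each j, the product ∏_t h j t (x t) is integrable with integral A * B^(m-1)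
  set A := ∫ ω, g (x 0 ω) ∂ℙ with hA_def
  set B := ∫ ω, p (x 0 ω) ∂ℙ with hB_def
  have key : ∀ j ∈ Finset.range m,
      Integrable (fun ω => ∏ t ∈ Finset.range m, h j t (x t ω)) ℙ ∧
      ∫ ω, ∏ t ∈ Finset.range m, h j t (x t ω) ∂ℙ = A * B ^ (m - 1) := by
    intro j hj
    have hindep' : iIndepFun (fun t => h j t ∘ x t) ℙ :=
      hindep.comp _ (fun t => hh_meas j t)
    have hint : ∀ t, Integrable (h j t ∘ x t) ℙ := by
      intro t
      rw [hh_cases j t]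
      by_cases hjt : t = j
      · simp only [hjt, if_true]
        exact ((hident j).comp hg_meas).integrable_iff.mpr hmom
      · simp only [hjt, if_false]
        exact ((hident t).comp hp_meas).integrable_iff.mpr hp0_int
    obtain ⟨hI, hEq⟩ := integrable_and_integral_prod_of_iIndepFun (fun t => h j t ∘ x t)
      (fun t => (hh_meas j t).comp (hmeas t)) hindep' hint m
    simp only [Function.comp_apply] at hEq hI
    refine ⟨hI, ?_⟩
    rw [hEq]
    have hval : ∀ t ∈ Finset.range m, (∫ ω, h j t (x t ω) ∂ℙ) = if t = j then A else B := by
      intro t _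
      rw [hh_cases j t]
      by_cases hjt : t = j
      · simp only [hjt, if_true]
        simpa [Function.comp] using ((hident j).comp hg_meas).integral_eq
      · simp only [hjt, if_false]
        simpa [Function.comp] using ((hident t).comp hp_meas).integral_eq
    rw [Finset.prod_congr rfl hval, ← Finset.mul_prod_erase _ _ hj]
    simp only [if_true]
    congr 1
    have hB : ∀ t ∈ (Finset.range m).erase j, (if t = j then A else B) = B := by
      intro t ht
      simp [Finset.ne_of_mem_erase ht]
    rw [Finset.prod_congr rfl hB, Finset.prod_const, Finset.card_erase_of_mem hj,
      Finset.card_range]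
  -- dominating function
  set G : Ω → ℝ := fun ω =>
    (m : ℝ) ^ (τ₂ - 1) * ∑ j ∈ Finset.range m, ∏ t ∈ Finset.range m, h j t (x t ω) with hG_def
  have hG_int : Integrable G ℙ :=
    (integrable_finset_sum _ (fun j hj => (key j hj).1)).const_mul _
  -- pointwise bound
  have hbound : ∀ ω, |∏ t ∈ Finset.range m, x t ω| ^ τ₁ *
      (Real.log (1 + |∏ t ∈ Finset.range m, x t ω|)) ^ τ₂ ≤ G ω := by
    intro ω
    set a : ℕ → ℝ := fun t => |x t ω| with ha_def
    have ha : ∀ t, 0 ≤ a t := fun t => abs_nonneg _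
    have habs : |∏ t ∈ Finset.range m, x t ω| = ∏ t ∈ Finset.range m, a t := by
      rw [Finset.abs_prod]
    rw [habs]
    set P := ∏ t ∈ Finset.range m, a t with hP_def
    have hP : 0 ≤ P := Finset.prod_nonneg (fun t _ => ha t)
    have hne : (Finset.range m).Nonempty := by
      rw [Finset.nonempty_range_iff]; omega
    have hL : ∀ t, 0 ≤ Real.log (1 + a t) := fun t =>
      Real.log_nonneg (by linarith [ha t])
    have h1 : Real.log (1 + P) ≤ ∑ t ∈ Finset.range m, Real.log (1 + a t) := by
      have hle : 1 + P ≤ ∏ t ∈ Finset.range m, (1 + a t) :=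
        one_add_prod_le_prod_one_add' hne a (fun t _ => ha t)
      calc Real.log (1 + P) ≤ Real.log (∏ t ∈ Finset.range m, (1 + a t)) :=
            Real.log_le_log (by linarith) hle
        _ = ∑ t ∈ Finset.range m, Real.log (1 + a t) :=
            Real.log_prod (fun t _ => by positivity)
    have hlogP : 0 ≤ Real.log (1 + P) := Real.log_nonneg (by linarith)
    have h2 : Real.log (1 + P) ^ τ₂ ≤
        (∑ t ∈ Finset.range m, Real.log (1 + a t)) ^ τ₂ :=
      Real.rpow_le_rpow hlogP h1 hτ₂0
    have h3 : (∑ t ∈ Finset.range m, Real.log (1 + a t)) ^ τ₂ ≤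
        (m : ℝ) ^ (τ₂ - 1) * ∑ t ∈ Finset.range m, Real.log (1 + a t) ^ τ₂ := by
      have := Real.rpow_sum_le_const_mul_sum_rpow_of_nonneg
        (s := Finset.range m) (f := fun t => Real.log (1 + a t)) hτ₂ (fun t _ => hL t)
      simpa [Finset.card_range] using this
    have hPτ : 0 ≤ P ^ τ₁ := Real.rpow_nonneg hP _
    have step : P ^ τ₁ * Real.log (1 + P) ^ τ₂ ≤
        P ^ τ₁ * ((m : ℝ) ^ (τ₂ - 1) * ∑ t ∈ Finset.range m, Real.log (1 + a t) ^ τ₂) :=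
      mul_le_mul_of_nonneg_left (h2.trans h3) hPτ
    refine step.trans (le_of_eq ?_)
    have hterm : ∀ j ∈ Finset.range m, ∏ t ∈ Finset.range m, h j t (x t ω)
        = P ^ τ₁ * Real.log (1 + a j) ^ τ₂ := by
      intro j hj
      have hprod : ∏ t ∈ Finset.range m, h j t (x t ω)
          = (∏ t ∈ Finset.range m, a t ^ τ₁) *
            ∏ t ∈ Finset.range m, (if t = j then Real.log (1 + a t) ^ τ₂ else 1) := by
        rw [← Finset.prod_mul_distrib]
      rw [hprod, Finset.prod_ite_eq' (Finset.range m) j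
        (fun t => Real.log (1 + a t) ^ τ₂), if_pos hj,
        Real.finset_prod_rpow _ _ (fun t _ => ha t)]
    rw [hG_def]
    simp only
    rw [Finset.sum_congr rfl hterm]
    simp only [Finset.mul_sum]
    exact Finset.sum_congr rfl (fun j _ => by ring)
  have hf_meas : AEStronglyMeasurable (fun ω => |∏ t ∈ Finset.range m, x t ω| ^ τ₁ *
      (Real.log (1 + |∏ t ∈ Finset.range m, x t ω|)) ^ τ₂) ℙ := by
    have : Measurable (fun ω => ∏ t ∈ Finset.range m, x t ω) :=
      Finset.measurable_prod _ (fun t _ => hmeas t)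
    exact (hg_meas.comp this).aestronglyMeasurable
  have hf_nonneg : ∀ ω, 0 ≤ |∏ t ∈ Finset.range m, x t ω| ^ τ₁ *
      (Real.log (1 + |∏ t ∈ Finset.range m, x t ω|)) ^ τ₂ := fun ω => hg_nonneg _
  have hf_int : Integrable (fun ω => |∏ t ∈ Finset.range m, x t ω| ^ τ₁ *
      (Real.log (1 + |∏ t ∈ Finset.range m, x t ω|)) ^ τ₂) ℙ := by
    refine Integrable.mono hG_int hf_meas ?_
    filter_upwards with ω
    rw [Real.norm_eq_abs, Real.norm_eq_abs, abs_of_nonneg (hf_nonneg ω),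
      abs_of_nonneg (le_trans (hf_nonneg ω) (hbound ω))]
    exact hbound ω
  refine ⟨hf_int, ?_⟩
  have hIG : ∫ ω, G ω ∂ℙ = (m : ℝ) ^ τ₂ * A * B ^ (m - 1) := by
    rw [hG_def]
    simp only
    rw [integral_const_mul, integral_finset_sum _ (fun j hj => (key j hj).1),
      Finset.sum_congr rfl (fun j hj => (key j hj).2), Finset.sum_const, Finset.card_range,
      nsmul_eq_mul]
    have hm0 : (0:ℝ) < (m:ℝ) := by exact_mod_cast hm
    have hmp : (m:ℝ) ^ (τ₂ - 1) * (m:ℝ) = (m:ℝ) ^ τ₂ := by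
      nth_rewrite 2 [← Real.rpow_one (m:ℝ)]
      rw [← Real.rpow_add hm0]
      ring_nf
    linear_combination (A * B ^ (m - 1)) * hmp
  calc ∫ ω, |∏ t ∈ Finset.range m, x t ω| ^ τ₁ *
        (Real.log (1 + |∏ t ∈ Finset.range m, x t ω|)) ^ τ₂ ∂ℙ
      ≤ ∫ ω, G ω ∂ℙ := integral_mono hf_int hG_int hbound
    _ = (m : ℝ) ^ τ₂ * A * B ^ (m - 1) := hIG
end

section
/- Let τ₁ > 2 and τ₂ > 3/2 be real numbers and define g(x) = x^{τ₁} log^{τ₂}(1+x) for x ≥ 0. Then g is a convex function on [0, ∞). -/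
open Real

lemma aux_hL (x : ℝ) (hx : 0 < x) :
    HasDerivAt (fun x : ℝ => Real.log (1 + x)) ((1 + x)⁻¹) x := by
  simpa [one_div] using (((hasDerivAt_id x).const_add 1).log (by positivity))

lemma aux_hd1 (τ₁ τ₂ x : ℝ) (hx : 0 < x) :
    HasDerivAt (fun x : ℝ => x ^ τ₁ * Real.log (1 + x) ^ τ₂)
      (τ₁ * x ^ (τ₁ - 1) * Real.log (1 + x) ^ τ₂
        + x ^ τ₁ * ((1 + x)⁻¹ * τ₂ * Real.log (1 + x) ^ (τ₂ - 1))) x := by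
  have hLpos : 0 < Real.log (1 + x) := Real.log_pos (by linarith)
  exact (Real.hasDerivAt_rpow_const (Or.inl hx.ne')).mul
    ((aux_hL x hx).rpow_const (Or.inl hLpos.ne'))

lemma aux_hd2 (τ₁ τ₂ x : ℝ) (hx : 0 < x) :
    HasDerivAt (fun x : ℝ => τ₁ * x ^ (τ₁ - 1) * Real.log (1 + x) ^ τ₂
        + x ^ τ₁ * ((1 + x)⁻¹ * τ₂ * Real.log (1 + x) ^ (τ₂ - 1)))
      (τ₁ * (τ₁ - 1) * x ^ (τ₁ - 2) * Real.log (1 + x) ^ τ₂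
        + 2 * τ₁ * τ₂ * x ^ (τ₁ - 1) * Real.log (1 + x) ^ (τ₂ - 1) * (1 + x)⁻¹
        + τ₂ * (τ₂ - 1) * x ^ τ₁ * Real.log (1 + x) ^ (τ₂ - 2) * ((1 + x)⁻¹) ^ 2
        - τ₂ * x ^ τ₁ * Real.log (1 + x) ^ (τ₂ - 1) * ((1 + x)⁻¹) ^ 2) x := by
  have hLpos : 0 < Real.log (1 + x) := Real.log_pos (by linarith)
  have h1x : (0:ℝ) < 1 + x := by linarith
  have hA : HasDerivAt (fun x : ℝ => τ₁ * x ^ (τ₁ - 1))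
      (τ₁ * ((τ₁ - 1) * x ^ (τ₁ - 1 - 1))) x :=
    (Real.hasDerivAt_rpow_const (Or.inl hx.ne')).const_mul τ₁
  have hLp : HasDerivAt (fun x : ℝ => Real.log (1 + x) ^ τ₂)
      ((1 + x)⁻¹ * τ₂ * Real.log (1 + x) ^ (τ₂ - 1)) x :=
    (aux_hL x hx).rpow_const (Or.inl hLpos.ne')
  have hLp2 : HasDerivAt (fun x : ℝ => Real.log (1 + x) ^ (τ₂ - 1))
      ((1 + x)⁻¹ * (τ₂ - 1) * Real.log (1 + x) ^ (τ₂ - 1 - 1)) x :=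
    (aux_hL x hx).rpow_const (Or.inl hLpos.ne')
  have hinv : HasDerivAt (fun x : ℝ => (1 + x)⁻¹) (-1 / (1 + x) ^ 2) x :=
    ((hasDerivAt_id x).const_add 1).inv h1x.ne'
  have hC : HasDerivAt (fun x : ℝ => (1 + x)⁻¹ * τ₂ * Real.log (1 + x) ^ (τ₂ - 1))
      ((-1 / (1 + x) ^ 2 * τ₂) * Real.log (1 + x) ^ (τ₂ - 1)
        + ((1 + x)⁻¹ * τ₂) * ((1 + x)⁻¹ * (τ₂ - 1) * Real.log (1 + x) ^ (τ₂ - 1 - 1))) x :=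
    (hinv.mul_const τ₂).mul hLp2
  have hB : HasDerivAt (fun x : ℝ => x ^ τ₁ * ((1 + x)⁻¹ * τ₂ * Real.log (1 + x) ^ (τ₂ - 1)))
      _ x := (Real.hasDerivAt_rpow_const (Or.inl hx.ne')).mul hC
  have := (hA.mul hLp).add hB
  convert this using 1
  case e'_4 => rfl
  case e'_5 => rfl
  case e'_8 => rfl
  rw [show τ₁ - 1 - 1 = τ₁ - 2 by ring, show τ₂ - 1 - 1 = τ₂ - 2 by ring]
  have h2 : ((1:ℝ) + x) ^ 2 ≠ 0 := by positivity
  field_simp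
  ring

/-- Convexity of `g(x) = x^{τ₁} (log(1+x))^{τ₂}` on `[0, ∞)` for `τ₁ > 2` and `τ₂ > 3/2`. -/
theorem convexOn_rpow_mul_log_rpow
    (τ₁ τ₂ : ℝ) (hτ₁ : 2 < τ₁) (hτ₂ : 3 / 2 < τ₂) :
    ConvexOn ℝ (Set.Ici (0 : ℝ))
      (fun x : ℝ => x ^ τ₁ * (Real.log (1 + x)) ^ τ₂) := by
  have hF1ev : ∀ x ∈ Set.Ioi (0:ℝ),
      deriv (fun x : ℝ => x ^ τ₁ * Real.log (1 + x) ^ τ₂) =ᶠ[nhds x]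
        (fun x : ℝ => τ₁ * x ^ (τ₁ - 1) * Real.log (1 + x) ^ τ₂
          + x ^ τ₁ * ((1 + x)⁻¹ * τ₂ * Real.log (1 + x) ^ (τ₂ - 1))) := by
    intro x hx
    exact Filter.eventuallyEq_of_mem (isOpen_Ioi.mem_nhds hx)
      (fun y hy => (aux_hd1 τ₁ τ₂ y hy).deriv)
  apply convexOn_of_deriv2_nonneg (convex_Ici 0)
  · -- continuity
    intro x hx
    have h1x : (0:ℝ) < 1 + x := by have : (0:ℝ) ≤ x := hx; linarith
    apply ContinuousAt.continuousWithinAt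
    have hc1 : ContinuousAt (fun x : ℝ => x ^ τ₁) x :=
      (Real.continuous_rpow_const (by linarith)).continuousAt
    have hc2 : ContinuousAt (fun x : ℝ => Real.log (1 + x)) x :=
      (Real.continuousAt_log h1x.ne').comp ((continuous_const.add continuous_id).continuousAt)
    exact hc1.mul ((Real.continuous_rpow_const (by linarith)).continuousAt.comp hc2)
  · rw [interior_Ici]
    intro x hx
    exact (aux_hd1 τ₁ τ₂ x hx).differentiableAt.differentiableWithinAt
  · rw [interior_Ici]
    intro x hx
    exact (((hF1ev x hx).differentiableAt_iff).mpr
      (aux_hd2 τ₁ τ₂ x hx).differentiableAt).differentiableWithinAt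
  · rw [interior_Ici]
    intro x hx
    have hx' : (0:ℝ) < x := hx
    have hLpos : 0 < Real.log (1 + x) := Real.log_pos (by linarith)
    have h1x : (0:ℝ) < 1 + x := by linarith
    have h2 : deriv^[2] (fun x : ℝ => x ^ τ₁ * Real.log (1 + x) ^ τ₂) x
        = τ₁ * (τ₁ - 1) * x ^ (τ₁ - 2) * Real.log (1 + x) ^ τ₂
          + 2 * τ₁ * τ₂ * x ^ (τ₁ - 1) * Real.log (1 + x) ^ (τ₂ - 1) * (1 + x)⁻¹
          + τ₂ * (τ₂ - 1) * x ^ τ₁ * Real.log (1 + x) ^ (τ₂ - 2) * ((1 + x)⁻¹) ^ 2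
          - τ₂ * x ^ τ₁ * Real.log (1 + x) ^ (τ₂ - 1) * ((1 + x)⁻¹) ^ 2 := by
      have h21 : deriv^[2] (fun x : ℝ => x ^ τ₁ * Real.log (1 + x) ^ τ₂) x
          = deriv (deriv (fun x : ℝ => x ^ τ₁ * Real.log (1 + x) ^ τ₂)) x := by
        simp [Function.iterate_succ_apply', Function.iterate_one]
      rw [h21, (hF1ev x hx).deriv_eq, (aux_hd2 τ₁ τ₂ x hx').deriv]
    rw [h2]
    have hT1 : 0 ≤ τ₁ * (τ₁ - 1) * x ^ (τ₁ - 2) * Real.log (1 + x) ^ τ₂ := by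
      apply mul_nonneg (mul_nonneg (mul_nonneg (by linarith) (by linarith))
        (Real.rpow_nonneg hx'.le _)) (Real.rpow_nonneg hLpos.le _)
    have hT3 : 0 ≤ τ₂ * (τ₂ - 1) * x ^ τ₁ * Real.log (1 + x) ^ (τ₂ - 2) * ((1 + x)⁻¹) ^ 2 := by
      apply mul_nonneg (mul_nonneg (mul_nonneg (mul_nonneg (by linarith) (by linarith))
        (Real.rpow_nonneg hx'.le _)) (Real.rpow_nonneg hLpos.le _)) (by positivity)
    have hxt : x ^ τ₁ = x ^ (τ₁ - 1) * x := by
      rw [show τ₁ = τ₁ - 1 + 1 by ring, Real.rpow_add_one hx'.ne']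
      ring_nf
    have hkey : 0 ≤ 2 * τ₁ * τ₂ * x ^ (τ₁ - 1) * Real.log (1 + x) ^ (τ₂ - 1) * (1 + x)⁻¹
        - τ₂ * x ^ τ₁ * Real.log (1 + x) ^ (τ₂ - 1) * ((1 + x)⁻¹) ^ 2 := by
      rw [hxt]
      have e : 2 * τ₁ * τ₂ * x ^ (τ₁ - 1) * Real.log (1 + x) ^ (τ₂ - 1) * (1 + x)⁻¹
          - τ₂ * (x ^ (τ₁ - 1) * x) * Real.log (1 + x) ^ (τ₂ - 1) * ((1 + x)⁻¹) ^ 2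
          = τ₂ * x ^ (τ₁ - 1) * Real.log (1 + x) ^ (τ₂ - 1) * ((1 + x)⁻¹) ^ 2
              * (2 * τ₁ * (1 + x) - x) := by
        field_simp
      rw [e]
      apply mul_nonneg (mul_nonneg (mul_nonneg (mul_nonneg (by linarith)
        (Real.rpow_nonneg hx'.le _)) (Real.rpow_nonneg hLpos.le _)) (by positivity))
      nlinarith
    linarith
end
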